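/- arXiv:1310.5873 — 2 statements merged into one kernel-verified Lean document; each statement's English description precedes it below -/
import Mathlib

section
/- Let ε = 0.001 and let n be sufficiently large with εn an integer. Let H be a maximal graph in 𝓕_n(2), i.e., a graph on n vertices with maximum degree at most 2 to which no edge can be added while keeping the maximum degree at most 2. Then W := V(H) admits a partition W = W_0 ∪ W_1 ∪ ⋯ ∪ W_6 with |W_0| = 4εn, |W_6| = 2εn, and |W_i| ≥ 2εn for i = 1,…,5, such that: (1) each of W_1,…,W_5 is 2-independent in H; (2) W_6 is 3-independent in H and every vertex of W_6 has degree exactly 2 in H; and (3) W_0 = N_H(W_6). -/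
/-- ε = 0.001 -/
noncomputable def eps : ℝ := 0.001

/-- A set `S` is `k`-independent in `H` if the distance in `H` between any two
distinct vertices of `S` is greater than `k` (distance between vertices in
different components being infinite). -/
def KIndep {α : Type*} (H : SimpleGraph α) (k : ℕ) (S : Finset α) : Prop :=
  ∀ x ∈ S, ∀ y ∈ S, x ≠ y → (k : ℕ∞) < H.edist x y

/-- `H` has maximum degree at most `2` and no edge can be added to `H` while
keeping the maximum degree at most `2`. -/
def MaximalDeg2 {α : Type*} (H : SimpleGraph α) : Prop :=
  (∀ v, (H.neighborSet v).ncard ≤ 2) ∧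
  ∀ a b : α, a ≠ b → ¬ H.Adj a b →
    ∃ v, 2 < (((H ⊔ SimpleGraph.fromEdgeSet {s(a, b)}).neighborSet v)).ncard

set_option linter.unusedSectionVars false

namespace Aux

open Finset

variable {V : Type*} [Fintype V] [DecidableEq V] {H : SimpleGraph V}

open Classical in
noncomputable def Nfin (H : SimpleGraph V) (v : V) : Finset V :=
  Finset.univ.filter (fun u => H.Adj v u)

lemma mem_Nfin {v u : V} : u ∈ Nfin H v ↔ H.Adj v u := by
  simp [Nfin]

lemma ncard_eq (v : V) : (H.neighborSet v).ncard = (Nfin H v).card := by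
  have h : H.neighborSet v = ↑(Nfin H v) := by
    ext u; simp [mem_Nfin, SimpleGraph.mem_neighborSet]
  rw [h, Set.ncard_coe_finset]

open Classical in
noncomputable def Bfin (H : SimpleGraph V) (v : V) (k : ℕ) : Finset V :=
  Finset.univ.filter (fun u => H.edist v u ≤ k)

lemma mem_Bfin {v u : V} {k : ℕ} : u ∈ Bfin H v k ↔ H.edist v u ≤ k := by simp [Bfin]

open Classical in
noncomputable def Pball (H : SimpleGraph V) (v : V) (k : ℕ) : Finset V :=
  Finset.univ.filter (fun u => u ≠ v ∧ H.edist v u ≤ k)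

lemma mem_Pball {v u : V} {k : ℕ} : u ∈ Pball H v k ↔ u ≠ v ∧ H.edist v u ≤ k := by
  simp [Pball]

lemma exists_adj_of_edist_le {v u : V} {k : ℕ} (hne : v ≠ u)
    (h : H.edist v u ≤ (k + 1 : ℕ)) : ∃ z, H.Adj v z ∧ H.edist z u ≤ k := by
  have hnt : H.edist v u ≠ ⊤ := by
    intro ht; rw [ht] at h
    exact (lt_irrefl _ (lt_of_le_of_lt h (ENat.coe_lt_top _)))
  obtain ⟨p, hp⟩ := SimpleGraph.exists_walk_of_edist_ne_top hnt
  cases p with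
  | nil => exact absurd rfl hne
  | @cons _ z _ hadj q =>
    refine ⟨z, hadj, ?_⟩
    have h1 : ((q.length + 1 : ℕ) : ℕ∞) ≤ ((k + 1 : ℕ) : ℕ∞) := by
      rw [← SimpleGraph.Walk.length_cons hadj q, hp]; exact h
    have h2 : q.length ≤ k := by exact_mod_cast Nat.le_of_succ_le_succ (by exact_mod_cast h1)
    exact le_trans (SimpleGraph.edist_le q) (by exact_mod_cast h2)

lemma adj_of_edist_le_one {v u : V} (hne : v ≠ u) (h : H.edist v u ≤ 1) : H.Adj v u := by
  have h1 : (1 : ℕ∞) ≤ H.edist v u :=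
    Order.one_le_iff_pos.mpr (SimpleGraph.edist_pos_of_ne hne)
  exact SimpleGraph.edist_eq_one_iff_adj.mp (le_antisymm h h1)

lemma card_Pball2_le (hdeg : ∀ w, (Nfin H w).card ≤ 2) (v : V) :
    (Pball H v 2).card ≤ 4 := by
  have hsub : Pball H v 2 ⊆ (Nfin H v).biUnion (fun z => insert z ((Nfin H z).erase v)) := by
    intro u hu
    rw [mem_Pball] at hu
    obtain ⟨hne, hle⟩ := hu
    obtain ⟨z, hz, hzu⟩ := exists_adj_of_edist_le (Ne.symm hne) (by exact_mod_cast hle)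
    rw [mem_biUnion]
    refine ⟨z, mem_Nfin.mpr hz, ?_⟩
    rcases eq_or_ne u z with rfl | huz
    · exact mem_insert_self _ _
    · refine mem_insert_of_mem (mem_erase.mpr ⟨hne, mem_Nfin.mpr ?_⟩)
      exact adj_of_edist_le_one (Ne.symm huz) hzu
  refine le_trans (card_le_card hsub) (le_trans (card_biUnion_le_card_mul _ _ 2 ?_) ?_)
  · intro z hz
    have hvz : v ∈ Nfin H z := mem_Nfin.mpr ((mem_Nfin.mp hz)).symm
    have h2 := hdeg z
    have h1 : ((Nfin H z).erase v).card ≤ 1 := by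
      rw [card_erase_of_mem hvz]; omega
    calc (insert z ((Nfin H z).erase v)).card ≤ ((Nfin H z).erase v).card + 1 :=
          card_insert_le _ _
      _ ≤ 2 := by omega
  · have := hdeg v; omega

lemma card_Bfin2_le (hdeg : ∀ w, (Nfin H w).card ≤ 2) (v : V) :
    (Bfin H v 2).card ≤ 5 := by
  have hsub : Bfin H v 2 ⊆ insert v (Pball H v 2) := by
    intro u hu
    rcases eq_or_ne u v with rfl | hne
    · exact mem_insert_self _ _
    · exact mem_insert_of_mem (mem_Pball.mpr ⟨hne, mem_Bfin.mp hu⟩)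
  have := card_Pball2_le hdeg v
  calc (Bfin H v 2).card ≤ (insert v (Pball H v 2)).card := card_le_card hsub
    _ ≤ (Pball H v 2).card + 1 := card_insert_le _ _
    _ ≤ 5 := by omega

lemma card_Bfin3_le (hdeg : ∀ w, (Nfin H w).card ≤ 2) (v : V) :
    (Bfin H v 3).card ≤ 11 := by
  have hsub : Bfin H v 3 ⊆ insert v ((Nfin H v).biUnion (fun z => Bfin H z 2)) := by
    intro u hu
    rcases eq_or_ne u v with rfl | hne
    · exact mem_insert_self _ _
    · obtain ⟨z, hz, hzu⟩ := exists_adj_of_edist_le (Ne.symm hne)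
        (by exact_mod_cast mem_Bfin.mp hu)
      exact mem_insert_of_mem (mem_biUnion.mpr ⟨z, mem_Nfin.mpr hz, mem_Bfin.mpr hzu⟩)
  have h1 : ((Nfin H v).biUnion (fun z => Bfin H z 2)).card ≤ 10 :=
    le_trans (card_biUnion_le_card_mul _ _ 5 (fun z _ => card_Bfin2_le hdeg z))
      (by have := hdeg v; omega)
  calc (Bfin H v 3).card ≤ (insert v ((Nfin H v).biUnion (fun z => Bfin H z 2))).card :=
        card_le_card hsub
    _ ≤ ((Nfin H v).biUnion (fun z => Bfin H z 2)).card + 1 := card_insert_le _ _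
    _ ≤ 11 := by omega

lemma greedy (k c : ℕ) (hb : ∀ v, (Bfin H v k).card ≤ c) (D : Finset V) :
    ∀ m : ℕ, m * c < D.card → ∃ S : Finset V, S ⊆ D ∧ S.card = m ∧ KIndep H k S := by
  intro m
  induction m with
  | zero => exact fun _ => ⟨∅, by simp, by simp, by intro x hx; simp at hx⟩
  | succ m ih =>
    intro hm
    obtain ⟨S, hSD, hScard, hSind⟩ :=
      ih (lt_of_le_of_lt (Nat.mul_le_mul_right _ (Nat.le_succ m)) hm)
    have hblock : (S.biUnion (fun w => Bfin H w k)).card ≤ m * c := by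
      have := card_biUnion_le_card_mul S (fun w => Bfin H w k) c (fun w _ => hb w)
      rw [hScard] at this; exact this
    have hne : (D \ S.biUnion (fun w => Bfin H w k)).Nonempty := by
      rw [← card_pos]
      have h1 := le_card_sdiff (S.biUnion (fun w => Bfin H w k)) D
      have h2 : m * c ≤ (m+1) * c := Nat.mul_le_mul_right _ (Nat.le_succ m)
      omega
    obtain ⟨v, hv⟩ := hne
    rw [mem_sdiff] at hv
    obtain ⟨hvD, hvB⟩ := hv
    have hfar : ∀ w ∈ S, (k : ℕ∞) < H.edist w v := by
      intro w hw
      by_contra hle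
      exact hvB (mem_biUnion.mpr ⟨w, hw, mem_Bfin.mpr (not_lt.mp hle)⟩)
    have hvS : v ∉ S := by
      intro hvS
      have := hfar v hvS
      rw [SimpleGraph.edist_self] at this
      exact (not_lt.mpr zero_le) this
    refine ⟨insert v S, ?_, ?_, ?_⟩
    · intro x hx; rcases mem_insert.mp hx with rfl | hx
      · exact hvD
      · exact hSD hx
    · rw [card_insert_of_notMem hvS, hScard]
    · intro x hx y hy hxy
      rcases mem_insert.mp hx with hx1 | hx1
      · rcases mem_insert.mp hy with hy1 | hy1
        · exact absurd (hx1.trans hy1.symm) hxy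
        · subst hx1; rw [SimpleGraph.edist_comm]; exact hfar y hy1
      · rcases mem_insert.mp hy with hy1 | hy1
        · subst hy1; exact hfar x hx1
        · exact hSind x hx1 y hy1 hxy

lemma extend_coloring (hdeg : ∀ w, (Nfin H w).card ≤ 2) (pre : V → Fin 5) :
    ∀ N : ℕ, ∀ R T : Finset V, (R \ T).card = N → T ⊆ R → KIndep H 2 T →
    ∃ c : V → Fin 5, (∀ t ∈ T, c t = pre t) ∧
      ∀ x ∈ R, ∀ y ∈ R, x ≠ y → H.edist x y ≤ 2 → c x ≠ c y := by
  intro N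
  induction N with
  | zero =>
    intro R T h hTR hT
    have hRT : R = T := by
      refine subset_antisymm (fun x hx => ?_) hTR
      by_contra hxT
      have hmem : x ∈ R \ T := mem_sdiff.mpr ⟨hx, hxT⟩
      rw [card_eq_zero.mp h] at hmem
      exact notMem_empty _ hmem
    subst hRT
    refine ⟨pre, fun t _ => rfl, fun x hx y hy hxy hd => ?_⟩
    exact absurd hd (not_le.mpr (hT x hx y hy hxy))
  | succ N ih =>
    intro R T h hTR hT
    have hne : (R \ T).Nonempty := by rw [← card_pos, h]; omega
    obtain ⟨v, hv⟩ := hne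
    rw [mem_sdiff] at hv
    obtain ⟨hvR, hvT⟩ := hv
    have hT' : T ⊆ R.erase v := fun t ht =>
      mem_erase.mpr ⟨fun hh => hvT (hh ▸ ht), hTR ht⟩
    have hcard : ((R.erase v) \ T).card = N := by
      have heq : (R.erase v) \ T = (R \ T).erase v := by
        ext x; simp only [mem_erase, mem_sdiff]; tauto
      rw [heq, card_erase_of_mem (mem_sdiff.mpr ⟨hvR, hvT⟩), h]
      omega
    obtain ⟨c, hc1, hc2⟩ := ih (R.erase v) T hcard hT' hT
    classical
    set Q := (R.erase v) ∩ Pball H v 2 with hQdef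
    have hQcard : Q.card ≤ 4 :=
      le_trans (card_le_card inter_subset_right) (card_Pball2_le hdeg v)
    have hex : ∃ i : Fin 5, i ∉ Q.image c := by
      by_contra hcon
      push_neg at hcon
      have hsub : (Finset.univ : Finset (Fin 5)) ⊆ Q.image c := fun i _ => hcon i
      have h5 := card_le_card hsub
      have h4 := le_trans (card_image_le (s := Q) (f := c)) hQcard
      simp only [card_univ, Fintype.card_fin] at h5
      omega
    obtain ⟨i, hi⟩ := hex
    refine ⟨Function.update c v i, ?_, ?_⟩
    · intro t ht
      rw [Function.update_of_ne (fun hh => hvT (by rw [← hh]; exact ht))]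
      exact hc1 t ht
    · intro x hx y hy hxy hd
      rcases eq_or_ne x v with rfl | hxv
      · have hyQ : y ∈ Q := mem_inter.mpr ⟨mem_erase.mpr ⟨Ne.symm hxy, hy⟩,
          mem_Pball.mpr ⟨Ne.symm hxy, hd⟩⟩
        rw [Function.update_self, Function.update_of_ne (Ne.symm hxy)]
        intro hcy
        exact hi (mem_image.mpr ⟨y, hyQ, hcy.symm⟩)
      · rcases eq_or_ne y v with rfl | hyv
        · have hxQ : x ∈ Q := mem_inter.mpr ⟨mem_erase.mpr ⟨hxv, hx⟩,
            mem_Pball.mpr ⟨hxv, by rwa [SimpleGraph.edist_comm]⟩⟩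
          rw [Function.update_self, Function.update_of_ne hxv]
          intro hcx
          exact hi (mem_image.mpr ⟨x, hxQ, hcx⟩)
        · rw [Function.update_of_ne hxv, Function.update_of_ne hyv]
          exact hc2 x (mem_erase.mpr ⟨hxv, hx⟩) y (mem_erase.mpr ⟨hyv, hy⟩) hxy hd

open Classical in
lemma low_degree_card (hH : MaximalDeg2 H) :
    (Finset.univ.filter (fun v : V => (Nfin H v).card ≠ 2)).card ≤ 2 := by
  obtain ⟨hdeg, hmax⟩ := hH
  have hdeg' : ∀ v, (Nfin H v).card ≤ 2 := fun v => (ncard_eq v) ▸ hdeg v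
  set L := Finset.univ.filter (fun v : V => (Nfin H v).card ≠ 2) with hL
  have hLsmall : ∀ x ∈ L, (Nfin H x).card ≤ 1 := by
    intro x hx
    have h1 : (Nfin H x).card ≠ 2 := by
      have := mem_filter.mp hx; exact this.2
    have := hdeg' x
    omega
  have hadj : ∀ a ∈ L, ∀ b ∈ L, a ≠ b → H.Adj a b := by
    intro a ha b hb hab
    by_contra hnadj
    obtain ⟨v, hv⟩ := hmax a b hab hnadj
    set H' := H ⊔ SimpleGraph.fromEdgeSet {s(a, b)} with hH'
    have hsub : ∀ u, H'.Adj v u → H.Adj v u ∨ (v = a ∧ u = b) ∨ (v = b ∧ u = a) := by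
      intro u hu
      rw [hH', SimpleGraph.sup_adj, SimpleGraph.fromEdgeSet_adj] at hu
      rcases hu with h1 | ⟨h2, _⟩
      · exact Or.inl h1
      · right
        rw [Set.mem_singleton_iff, Sym2.eq_iff] at h2
        rcases h2 with ⟨h3, h4⟩ | ⟨h3, h4⟩
        · exact Or.inl ⟨h3, h4⟩
        · exact Or.inr ⟨h3, h4⟩
    have hB := ncard_eq (H := H) v
    rcases eq_or_ne v a with hva | hva
    · subst hva
      have hsub2 : H'.neighborSet v ⊆ insert b (H.neighborSet v) := by
        intro u hu
        rcases hsub u hu with h | ⟨_, rfl⟩ | ⟨hh, _⟩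
        · exact Set.mem_insert_of_mem _ h
        · exact Set.mem_insert _ _
        · exact absurd hh hab
      have hcard : (H'.neighborSet v).ncard ≤ (H.neighborSet v).ncard + 1 :=
        le_trans (Set.ncard_le_ncard hsub2 (Set.toFinite _)) (Set.ncard_insert_le _ _)
      have h1 := hLsmall v ha
      omega
    · rcases eq_or_ne v b with hvb | hvb
      · subst hvb
        have hsub2 : H'.neighborSet v ⊆ insert a (H.neighborSet v) := by
          intro u hu
          rcases hsub u hu with h | ⟨hh, _⟩ | ⟨_, rfl⟩
          · exact Set.mem_insert_of_mem _ h
          · exact absurd hh hva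
          · exact Set.mem_insert _ _
        have hcard : (H'.neighborSet v).ncard ≤ (H.neighborSet v).ncard + 1 :=
          le_trans (Set.ncard_le_ncard hsub2 (Set.toFinite _)) (Set.ncard_insert_le _ _)
        have h1 := hLsmall v hb
        omega
      · have hsub2 : H'.neighborSet v ⊆ H.neighborSet v := by
          intro u hu
          rcases hsub u hu with h | ⟨hh, _⟩ | ⟨hh, _⟩
          · exact h
          · exact absurd hh hva
          · exact absurd hh hvb
        have hcard : (H'.neighborSet v).ncard ≤ (H.neighborSet v).ncard :=
          Set.ncard_le_ncard hsub2 (Set.toFinite _)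
        have h1 := hdeg' v
        omega
  by_contra hbig
  push_neg at hbig
  obtain ⟨t, htL, htcard⟩ := Finset.exists_subset_card_eq (show 3 ≤ L.card by omega)
  obtain ⟨a, b, c, hab, hac, hbc, hteq⟩ := Finset.card_eq_three.mp htcard
  have haL : a ∈ L := htL (by rw [hteq]; simp)
  have hbL : b ∈ L := htL (by rw [hteq]; simp)
  have hcL : c ∈ L := htL (by rw [hteq]; simp)
  have h1 : H.Adj a b := hadj a haL b hbL hab
  have h2 : H.Adj a c := hadj a haL c hcL hac
  have hsub : {b, c} ⊆ Nfin H a := by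
    intro x hx
    rcases mem_insert.mp hx with rfl | hx
    · exact mem_Nfin.mpr h1
    · rw [mem_singleton.mp hx]; exact mem_Nfin.mpr h2
  have h3 : ({b, c} : Finset V).card = 2 := card_pair hbc
  have h4 := card_le_card hsub
  have h5 := hLsmall a haL
  omega

end Aux

open Finset

theorem stmt3 :
    ∃ n₀ : ℕ, ∀ n ≥ n₀, 1000 ∣ n →
      ∀ H : SimpleGraph (Fin n), MaximalDeg2 H →
        ∃ W : Fin 7 → Finset (Fin n),
          (∀ i j : Fin 7, i ≠ j → Disjoint (W i) (W j)) ∧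
          (Finset.univ.biUnion W = Finset.univ) ∧
          ((W 0).card : ℝ) = 4 * eps * n ∧
          ((W 6).card : ℝ) = 2 * eps * n ∧
          (∀ i : Fin 7, i ≠ 0 → i ≠ 6 → 2 * eps * n ≤ ((W i).card : ℝ)) ∧
          (∀ i : Fin 7, i ≠ 0 → i ≠ 6 → KIndep H 2 (W i)) ∧
          KIndep H 3 (W 6) ∧
          (∀ w ∈ W 6, (H.neighborSet w).ncard = 2) ∧
          ((W 0 : Set (Fin n)) = {v | ∃ w ∈ W 6, H.Adj w v}) := by
  classical
  refine ⟨1000, fun n hn hdvd H hH => ?_⟩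
  obtain ⟨m, hm⟩ := hdvd
  have hm1 : 1 ≤ m := by omega
  have hdeg0 := hH.1
  have hdeg : ∀ v, (Aux.Nfin H v).card ≤ 2 := fun v => (Aux.ncard_eq v) ▸ hdeg0 v
  -- the set of degree-2 vertices
  set D := Finset.univ.filter (fun v : Fin n => (Aux.Nfin H v).card = 2) with hD
  have hDcard : n - 2 ≤ D.card := by
    have h1 := Aux.low_degree_card hH
    have h2 : D.card + (Finset.univ.filter
        (fun v : Fin n => ¬ (Aux.Nfin H v).card = 2)).card = n := by
      rw [hD]
      have h4 := Finset.card_filter_add_card_filter_not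
        (s := (Finset.univ : Finset (Fin n)))
        (p := fun v => (Aux.Nfin H v).card = 2)
      rw [card_univ, Fintype.card_fin] at h4
      exact h4
    have h3 : (Finset.univ.filter (fun v : Fin n => ¬ (Aux.Nfin H v).card = 2)).card ≤ 2 := h1
    omega
  -- W6 : 2m degree-2 vertices, pairwise distance > 3
  obtain ⟨W6, hW6D, hW6card, hW6ind⟩ :=
    Aux.greedy 3 11 (Aux.card_Bfin3_le hdeg) D (2 * m) (by omega)
  have hW6deg : ∀ w ∈ W6, (Aux.Nfin H w).card = 2 :=
    fun w hw => (Finset.mem_filter.mp (hW6D hw)).2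
  -- W0 := N(W6)
  set W0 := W6.biUnion (fun w => Aux.Nfin H w) with hW0def
  have hdisjN : ∀ x ∈ W6, ∀ y ∈ W6, x ≠ y → Disjoint (Aux.Nfin H x) (Aux.Nfin H y) := by
    intro x hx y hy hxy
    rw [Finset.disjoint_left]
    intro u hux huy
    have h1 : H.edist x u ≤ 1 :=
      le_of_eq (SimpleGraph.edist_eq_one_iff_adj.mpr (Aux.mem_Nfin.mp hux))
    have h2 : H.edist u y ≤ 1 := by
      rw [SimpleGraph.edist_comm]
      exact le_of_eq (SimpleGraph.edist_eq_one_iff_adj.mpr (Aux.mem_Nfin.mp huy))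
    have h3 : H.edist x y ≤ 2 :=
      le_trans (SimpleGraph.edist_triangle (v := u)) (by
        calc H.edist x u + H.edist u y ≤ 1 + 1 := add_le_add h1 h2
          _ = 2 := by norm_num)
    have h4 := hW6ind x hx y hy hxy
    have : (3 : ℕ∞) < 2 := lt_of_lt_of_le h4 h3
    norm_num at this
  have hW0card : W0.card = 4 * m := by
    rw [hW0def, Finset.card_biUnion hdisjN]
    rw [Finset.sum_congr rfl (fun w hw => hW6deg w hw), Finset.sum_const, hW6card]
    simp [mul_comm]; ring
  have hW0W6 : Disjoint W0 W6 := by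
    rw [Finset.disjoint_left]
    intro u hu0 hu6
    obtain ⟨w, hw, hwu⟩ := Finset.mem_biUnion.mp hu0
    have hadj : H.Adj w u := Aux.mem_Nfin.mp hwu
    rcases eq_or_ne w u with rfl | hne
    · exact H.loopless.irrefl _ hadj
    · have h4 := hW6ind w hw u hu6 hne
      rw [SimpleGraph.edist_eq_one_iff_adj.mpr hadj] at h4
      norm_num at h4
  set R := Finset.univ \ (W0 ∪ W6) with hRdef
  have hRcard : R.card = n - 6 * m := by
    rw [hRdef, Finset.card_sdiff_of_subset (Finset.subset_univ _),
      Finset.card_union_of_disjoint hW0W6, hW0card, hW6card, card_univ, Fintype.card_fin]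
    omega
  -- T : 10m vertices in R, pairwise distance > 2
  obtain ⟨T, hTR, hTcard, hTind⟩ :=
    Aux.greedy 2 5 (Aux.card_Bfin2_le hdeg) R (10 * m) (by omega)
  -- split T into 5 parts of size 2m each
  obtain ⟨T0, hT0s, hT0c⟩ := Finset.exists_subset_card_eq (show 2*m ≤ T.card by omega)
  have hc1 : (T \ T0).card = 8 * m := by rw [Finset.card_sdiff_of_subset hT0s]; omega
  obtain ⟨T1, hT1s, hT1c⟩ := Finset.exists_subset_card_eq (show 2*m ≤ (T \ T0).card by omega)
  have hc2 : ((T \ T0) \ T1).card = 6 * m := by rw [Finset.card_sdiff_of_subset hT1s]; omega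
  obtain ⟨T2, hT2s, hT2c⟩ :=
    Finset.exists_subset_card_eq (show 2*m ≤ ((T \ T0) \ T1).card by omega)
  have hc3 : (((T \ T0) \ T1) \ T2).card = 4 * m := by rw [Finset.card_sdiff_of_subset hT2s]; omega
  obtain ⟨T3, hT3s, hT3c⟩ :=
    Finset.exists_subset_card_eq (show 2*m ≤ (((T \ T0) \ T1) \ T2).card by omega)
  set T4 := (((T \ T0) \ T1) \ T2) \ T3 with hT4def
  have hT4c : T4.card = 2 * m := by rw [hT4def, Finset.card_sdiff_of_subset hT3s]; omega
  -- pre-coloring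
  set pre : Fin n → Fin 5 := fun v =>
    if v ∈ T0 then 0 else if v ∈ T1 then 1 else if v ∈ T2 then 2 else
      if v ∈ T3 then 3 else 4 with hpredef
  -- greedy coloring of R extending pre on T
  obtain ⟨c, hcpre, hcprop⟩ :=
    Aux.extend_coloring hdeg pre (R \ T).card R T rfl hTR hTind
  set C : Fin 5 → Finset (Fin n) := fun i => R.filter (fun v => c v = i) with hCdef
  have hCR : ∀ i, C i ⊆ R := fun i => Finset.filter_subset _ _
  -- the final partition
  set W : Fin 7 → Finset (Fin n) := fun j =>
    if j.val = 0 then W0 else if j.val = 6 then W6 else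
      C ⟨min (j.val - 1) 4, Nat.lt_succ_of_le (min_le_right _ _)⟩ with hWdef
  have hW0eq : W 0 = W0 := rfl
  have hW6eq : W 6 = W6 := rfl
  have hWCeq : ∀ j : Fin 7, j ≠ 0 → j ≠ 6 →
      W j = C ⟨min (j.val - 1) 4, Nat.lt_succ_of_le (min_le_right _ _)⟩ := by
    intro j hj0 hj6
    have h0 : j.val ≠ 0 := fun h => hj0 (Fin.ext h)
    have h6 : j.val ≠ 6 := fun h => hj6 (Fin.ext h)
    rw [hWdef]
    simp only [h0, h6, if_false]
  -- membership characterization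
  have hmemW : ∀ j : Fin 7, ∀ v, v ∈ W j →
      (j = 0 ∧ v ∈ W0) ∨ (j = 6 ∧ v ∈ W6) ∨
      (j ≠ 0 ∧ j ≠ 6 ∧ v ∈ C ⟨min (j.val - 1) 4, Nat.lt_succ_of_le (min_le_right _ _)⟩) := by
    intro j v hv
    by_cases hj0 : j = 0
    · left; exact ⟨hj0, by rw [hj0, hW0eq] at hv; exact hv⟩
    · by_cases hj6 : j = 6
      · right; left; exact ⟨hj6, by rw [hj6, hW6eq] at hv; exact hv⟩
      · right; right; exact ⟨hj0, hj6, by rw [hWCeq j hj0 hj6] at hv; exact hv⟩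
  have hRW0 : Disjoint R W0 := by
    rw [Finset.disjoint_left]
    intro v hvR hv0
    exact (Finset.mem_sdiff.mp hvR).2 (Finset.mem_union_left _ hv0)
  have hRW6 : Disjoint R W6 := by
    rw [Finset.disjoint_left]
    intro v hvR hv6
    exact (Finset.mem_sdiff.mp hvR).2 (Finset.mem_union_right _ hv6)
  have hidx : ∀ j j' : Fin 7, j ≠ 0 → j ≠ 6 → j' ≠ 0 → j' ≠ 6 →
      ((⟨min (j.val - 1) 4, Nat.lt_succ_of_le (min_le_right _ _)⟩ : Fin 5) =
        ⟨min (j'.val - 1) 4, Nat.lt_succ_of_le (min_le_right _ _)⟩) → j = j' := by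
    intro j j' h0 h6 h0' h6' h
    have hv0 : j.val ≠ 0 := fun hh => h0 (Fin.ext hh)
    have hv6 : j.val ≠ 6 := fun hh => h6 (Fin.ext hh)
    have hv0' : j'.val ≠ 0 := fun hh => h0' (Fin.ext hh)
    have hv6' : j'.val ≠ 6 := fun hh => h6' (Fin.ext hh)
    have hlt : j.val < 7 := j.isLt
    have hlt' : j'.val < 7 := j'.isLt
    have hve := congrArg Fin.val h
    simp only at hve
    exact Fin.ext (by omega)
  have hdisjW : ∀ i j : Fin 7, i ≠ j → Disjoint (W i) (W j) := by
    intro i j hij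
    rw [Finset.disjoint_left]
    intro v hvi hvj
    rcases hmemW i v hvi with ⟨hi0, hv0⟩ | ⟨hi6, hv6⟩ | ⟨hi0, hi6, hvC⟩ <;>
      rcases hmemW j v hvj with ⟨hj0, hw0⟩ | ⟨hj6, hw6⟩ | ⟨hj0, hj6, hwC⟩
    · exact hij (hi0.trans hj0.symm)
    · exact Finset.disjoint_left.mp hW0W6 hv0 hw6
    · exact Finset.disjoint_left.mp hRW0 (hCR _ hwC) hv0
    · exact Finset.disjoint_left.mp hW0W6 hw0 hv6
    · exact hij (hi6.trans hj6.symm)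
    · exact Finset.disjoint_left.mp hRW6 (hCR _ hwC) hv6
    · exact Finset.disjoint_left.mp hRW0 (hCR _ hvC) hw0
    · exact Finset.disjoint_left.mp hRW6 (hCR _ hvC) hw6
    · have h1 := (Finset.mem_filter.mp hvC).2
      have h2 := (Finset.mem_filter.mp hwC).2
      exact hij (hidx i j hi0 hi6 hj0 hj6 (h1.symm.trans h2))
  have hcover : Finset.univ.biUnion W = Finset.univ := by
    apply Finset.eq_univ_of_forall
    intro v
    rw [Finset.mem_biUnion]
    by_cases hv0 : v ∈ W0
    · exact ⟨0, Finset.mem_univ _, by rw [hW0eq]; exact hv0⟩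
    by_cases hv6 : v ∈ W6
    · exact ⟨6, Finset.mem_univ _, by rw [hW6eq]; exact hv6⟩
    have hvR : v ∈ R := Finset.mem_sdiff.mpr ⟨Finset.mem_univ _, by
      rw [Finset.mem_union]; tauto⟩
    have hclt : (c v).val < 5 := (c v).isLt
    refine ⟨⟨(c v).val + 1, by omega⟩, Finset.mem_univ _, ?_⟩
    have h0 : (⟨(c v).val + 1, by omega⟩ : Fin 7) ≠ 0 := by
      intro h; have := congrArg Fin.val h; simp at this
    have h6 : (⟨(c v).val + 1, by omega⟩ : Fin 7) ≠ 6 := by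
      intro h; have := congrArg Fin.val h; simp at this; omega
    rw [hWCeq _ h0 h6]
    have hidxeq : (⟨min ((⟨(c v).val + 1, by omega⟩ : Fin 7).val - 1) 4,
        Nat.lt_succ_of_le (min_le_right _ _)⟩ : Fin 5) = c v := Fin.ext (by simp; omega)
    rw [hidxeq]
    exact Finset.mem_filter.mpr ⟨hvR, rfl⟩
  have hnR : (n : ℝ) = 1000 * m := by exact_mod_cast congrArg Nat.cast hm
  have goal0 : ((W 0).card : ℝ) = 4 * eps * n := by
    rw [hW0eq, hW0card, hnR, eps]
    push_cast
    ring_nf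
  have goal6 : ((W 6).card : ℝ) = 2 * eps * n := by
    rw [hW6eq, hW6card, hnR, eps]
    push_cast
    ring_nf
  -- subset chains for the T-parts
  have hT1T : T1 ⊆ T \ T0 := hT1s
  have hT2T : T2 ⊆ (T \ T0) \ T1 := hT2s
  have hT3T : T3 ⊆ ((T \ T0) \ T1) \ T2 := hT3s
  have hT0sub : T0 ⊆ T := hT0s
  have hT1sub : T1 ⊆ T := fun t ht => (Finset.mem_sdiff.mp (hT1T ht)).1
  have hT2sub : T2 ⊆ T := fun t ht =>
    (Finset.mem_sdiff.mp (Finset.mem_sdiff.mp (hT2T ht)).1).1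
  have hT3sub : T3 ⊆ T := fun t ht =>
    (Finset.mem_sdiff.mp (Finset.mem_sdiff.mp (Finset.mem_sdiff.mp (hT3T ht)).1).1).1
  have hT4sub : T4 ⊆ T := fun t ht => by
    rw [hT4def] at ht
    exact (Finset.mem_sdiff.mp
      (Finset.mem_sdiff.mp (Finset.mem_sdiff.mp (Finset.mem_sdiff.mp ht).1).1).1).1
  have key : ∀ (Ti : Finset (Fin n)) (i : Fin 5), Ti ⊆ T → Ti.card = 2*m →
      (∀ t ∈ Ti, pre t = i) → 2*m ≤ (C i).card := by
    intro Ti i hsub hcard hpre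
    have hsubC : Ti ⊆ C i := by
      intro t ht
      refine Finset.mem_filter.mpr ⟨hTR (hsub ht), ?_⟩
      rw [hcpre t (hsub ht), hpre t ht]
    calc 2*m = Ti.card := hcard.symm
      _ ≤ _ := Finset.card_le_card hsubC
  have hCcard : ∀ i : Fin 5, 2 * m ≤ (C i).card := by
    intro i
    rcases i with ⟨iv, hiv⟩
    interval_cases iv
    · refine key T0 _ hT0s hT0c ?_
      intro t ht
      rw [hpredef]
      simp only [ht, if_true]
      rfl
    · refine key T1 _ hT1sub hT1c ?_
      intro t ht
      have hnot0 : t ∉ T0 := (Finset.mem_sdiff.mp (hT1T ht)).2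
      rw [hpredef]
      simp only [hnot0, if_false, ht, if_true]
      rfl
    · refine key T2 _ hT2sub hT2c ?_
      intro t ht
      have h2 := Finset.mem_sdiff.mp (hT2T ht)
      have hnot1 : t ∉ T1 := h2.2
      have hnot0 : t ∉ T0 := (Finset.mem_sdiff.mp h2.1).2
      rw [hpredef]
      simp only [hnot0, hnot1, if_false, ht, if_true]
      rfl
    · refine key T3 _ hT3sub hT3c ?_
      intro t ht
      have h3 := Finset.mem_sdiff.mp (hT3T ht)
      have hnot2 : t ∉ T2 := h3.2
      have h2 := Finset.mem_sdiff.mp h3.1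
      have hnot1 : t ∉ T1 := h2.2
      have hnot0 : t ∉ T0 := (Finset.mem_sdiff.mp h2.1).2
      rw [hpredef]
      simp only [hnot0, hnot1, hnot2, if_false, ht, if_true]
      rfl
    · refine key T4 _ hT4sub hT4c ?_
      intro t ht
      rw [hT4def] at ht
      have h4 := Finset.mem_sdiff.mp ht
      have hnot3 : t ∉ T3 := h4.2
      have h3 := Finset.mem_sdiff.mp h4.1
      have hnot2 : t ∉ T2 := h3.2
      have h2 := Finset.mem_sdiff.mp h3.1
      have hnot1 : t ∉ T1 := h2.2
      have hnot0 : t ∉ T0 := (Finset.mem_sdiff.mp h2.1).2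
      rw [hpredef]
      simp only [hnot0, hnot1, hnot2, hnot3, if_false]
      rfl
  have hCind : ∀ i : Fin 5, KIndep H 2 (C i) := by
    intro i x hx y hy hxy
    have hxR := (Finset.mem_filter.mp hx).1
    have hyR := (Finset.mem_filter.mp hy).1
    by_contra hle
    rw [not_lt] at hle
    have hle2 : H.edist x y ≤ 2 := by exact_mod_cast hle
    exact hcprop x hxR y hyR hxy hle2
      ((Finset.mem_filter.mp hx).2.trans (Finset.mem_filter.mp hy).2.symm)
  refine ⟨W, hdisjW, hcover, goal0, goal6, ?_, ?_, ?_, ?_, ?_⟩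
  · intro i hi0 hi6
    rw [hWCeq i hi0 hi6]
    have h1 := hCcard ⟨min (i.val - 1) 4, Nat.lt_succ_of_le (min_le_right _ _)⟩
    have h2 : ((2*m : ℕ) : ℝ) ≤
        ((C ⟨min (i.val - 1) 4, Nat.lt_succ_of_le (min_le_right _ _)⟩).card : ℝ) := by
      exact_mod_cast h1
    refine le_trans (le_of_eq ?_) h2
    rw [hnR, eps]
    push_cast
    ring_nf
  · intro i hi0 hi6
    rw [hWCeq i hi0 hi6]
    exact hCind _
  · rw [hW6eq]; exact hW6ind
  · intro w hw
    rw [hW6eq] at hw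
    rw [Aux.ncard_eq]
    exact hW6deg w hw
  · rw [hW0eq, hW6eq, hW0def]
    ext v
    simp [Aux.mem_Nfin]
end

section
/- Let H be a graph on n vertices with maximum degree at most 2. Then there exists a set S ⊆ V(H) with |S| ≥ n/7 such that S is 3-independent in H, i.e., the distance in H between every two distinct vertices of S is greater than 3. -/
open Finset SimpleGraph

variable {n : ℕ} {H : SimpleGraph (Fin n)}

/-- From a vertex at distance `r+1`, extract a neighbor at distance `r`. -/
lemma adj_of_edist_succ {v w : Fin n} {r : ℕ} (h : H.edist v w = ((r + 1 : ℕ) : ℕ∞)) :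
    ∃ u, H.Adj u w ∧ H.edist v u = (r : ℕ∞) := by
  obtain ⟨p, hp⟩ := SimpleGraph.exists_walk_of_edist_eq_coe h
  have hne : w ≠ v := by
    rintro rfl
    simp at h
    have : (0:ℕ) = r + 1 := by exact_mod_cast h
    omega
  obtain ⟨u, hadj, q, hq⟩ := SimpleGraph.Walk.exists_eq_cons_of_ne hne p.reverse
  have hqlen : q.length = r := by
    have := congrArg SimpleGraph.Walk.length hq
    simp [hp] at this
    omega
  refine ⟨u, hadj.symm, le_antisymm ?_ ?_⟩
  · calc H.edist v u ≤ q.reverse.length := SimpleGraph.edist_le _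
    _ = (r : ℕ∞) := by simp [hqlen]
  · have htri : H.edist v w ≤ H.edist v u + H.edist u w := SimpleGraph.edist_triangle
    have huw : H.edist u w ≤ 1 := by
      rw [show (1 : ℕ∞) = H.edist u w from (SimpleGraph.edist_eq_one_iff_adj.mpr hadj.symm).symm]
    have hle : H.edist v u ≤ (r : ℕ∞) := by
      calc H.edist v u ≤ q.reverse.length := SimpleGraph.edist_le _
      _ = (r : ℕ∞) := by simp [hqlen]
    lift H.edist v u to ℕ using (lt_of_le_of_lt hle (ENat.coe_lt_top r)).ne with k hk
    rw [h] at htri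
    have huw1 : H.edist u w ≤ (1:ℕ∞) := huw
    have : ((r+1:ℕ) : ℕ∞) ≤ (k : ℕ∞) + 1 := htri.trans (by exact add_le_add le_rfl huw1)
    have : (r:ℕ) + 1 ≤ k + 1 := by exact_mod_cast this
    exact_mod_cast Nat.le_of_succ_le_succ this

lemma deg_le (hdeg : ∀ v, (H.neighborSet v).ncard ≤ 2) (v : Fin n)
    (s : Finset (Fin n)) (hs : ∀ y ∈ s, H.Adj v y) : s.card ≤ 2 :=
  calc s.card = (↑s : Set (Fin n)).ncard := (Set.ncard_coe_finset s).symm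
  _ ≤ (H.neighborSet v).ncard := Set.ncard_le_ncard (fun y hy => hs y (by simpa using hy)) (Set.toFinite _)
  _ ≤ 2 := hdeg v

/-- The sphere of radius `r+2` is at most as large as the sphere of radius `r+1`. -/
lemma sphere_card_le (hdeg : ∀ v, (H.neighborSet v).ncard ≤ 2) (v : Fin n) (r : ℕ) :
    (univ.filter fun u => H.edist v u = ((r + 2 : ℕ) : ℕ∞)).card ≤
      (univ.filter fun u => H.edist v u = ((r + 1 : ℕ) : ℕ∞)).card := by
  classical
  have key : ∀ w ∈ (univ.filter fun u => H.edist v u = ((r + 2 : ℕ) : ℕ∞)),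
      ∃ u, H.Adj u w ∧ H.edist v u = ((r+1 : ℕ) : ℕ∞) := by
    intro w hw
    rw [mem_filter] at hw
    exact adj_of_edist_succ (by exact_mod_cast hw.2)
  set f : Fin n → Fin n := fun w =>
    if h : H.edist v w = ((r + 2 : ℕ) : ℕ∞) then
      Classical.choose (adj_of_edist_succ (r := r+1) (by exact_mod_cast h)) else w with hf
  apply Finset.card_le_card_of_injOn f
  · intro w hw
    rw [mem_coe, mem_filter] at hw ⊢
    have h2 := hw.2
    have hspec := Classical.choose_spec (adj_of_edist_succ (r := r+1)
      (v := v) (w := w) (by exact_mod_cast h2))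
    refine ⟨mem_univ _, ?_⟩
    simp only [hf, dif_pos h2]
    exact hspec.2
  · intro w hw w' hw' hfe
    by_contra hne
    rw [mem_coe, mem_filter] at hw hw'
    have hsw := Classical.choose_spec (adj_of_edist_succ (r := r+1)
      (v := v) (w := w) (by exact_mod_cast hw.2))
    have hsw' := Classical.choose_spec (adj_of_edist_succ (r := r+1)
      (v := v) (w := w') (by exact_mod_cast hw'.2))
    simp only [hf, dif_pos hw.2, dif_pos hw'.2] at hfe
    set u := Classical.choose (adj_of_edist_succ (r := r+1)
      (v := v) (w := w) (by exact_mod_cast hw.2)) with hu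
    -- u is adjacent to w and w', and has a neighbor x at distance r
    obtain ⟨x, hxu, hxd⟩ := adj_of_edist_succ (r := r) (v := v) (w := u) hsw.2
    have hxw : x ≠ w := by
      intro h; rw [h, hw.2] at hxd
      have : (r : ℕ) = r + 2 := by exact_mod_cast hxd.symm
      omega
    have hxw' : x ≠ w' := by
      intro h; rw [h, hw'.2] at hxd
      have : (r : ℕ) = r + 2 := by exact_mod_cast hxd.symm
      omega
    have hsub : ∀ y ∈ ({x, w, w'} : Finset (Fin n)), H.Adj u y := by
      intro y hy
      simp only [mem_insert, mem_singleton] at hy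
      rcases hy with rfl | rfl | rfl
      · exact hxu.symm
      · exact hsw.1
      · exact hfe ▸ hsw'.1
    have hcard : ({x, w, w'} : Finset (Fin n)).card = 3 := by
      rw [card_insert_of_notMem (by simp [hxw, hxw']),
        card_insert_of_notMem (by simpa using hne), card_singleton]
    have := hcard ▸ deg_le hdeg u _ hsub
    omega

lemma ball_card_le (hdeg : ∀ v, (H.neighborSet v).ncard ≤ 2) (v : Fin n) :
    (univ.filter fun u => H.edist v u ≤ 3).card ≤ 7 := by
  classical
  have hsub : (univ.filter fun u => H.edist v u ≤ 3) ⊆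
      (univ.filter fun u => H.edist v u = ((0:ℕ):ℕ∞)) ∪
      (univ.filter fun u => H.edist v u = ((1:ℕ):ℕ∞)) ∪
      (univ.filter fun u => H.edist v u = ((2:ℕ):ℕ∞)) ∪
      (univ.filter fun u => H.edist v u = ((3:ℕ):ℕ∞)) := by
    intro u hu
    rw [mem_filter] at hu
    have hne : H.edist v u ≠ ⊤ := by
      intro h; rw [h] at hu; exact (by simp : ¬((⊤:ℕ∞) ≤ 3)) hu.2
    obtain ⟨k, hk⟩ : ∃ k : ℕ, H.edist v u = (k : ℕ∞) :=
      ⟨(H.edist v u).toNat, (ENat.coe_toNat hne).symm⟩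
    have hk3 : k ≤ 3 := by
      rw [hk] at hu
      exact_mod_cast hu.2
    simp only [mem_union, mem_filter, mem_univ, true_and]
    interval_cases k <;> simp [hk]
  have h0 : (univ.filter fun u => H.edist v u = ((0:ℕ):ℕ∞)).card ≤ 1 := by
    apply Finset.card_le_one.mpr
    intro a ha b hb
    rw [mem_filter] at ha hb
    have ha' : v = a := by simpa using ha.2
    have hb' : v = b := by simpa using hb.2
    rw [← ha', ← hb']
  have h1 : (univ.filter fun u => H.edist v u = ((1:ℕ):ℕ∞)).card ≤ 2 := by
    apply deg_le hdeg v
    intro y hy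
    rw [mem_filter] at hy
    simpa using hy.2
  have h2 : (univ.filter fun u => H.edist v u = ((2:ℕ):ℕ∞)).card ≤
      (univ.filter fun u => H.edist v u = ((1:ℕ):ℕ∞)).card := sphere_card_le hdeg v 0
  have h3 : (univ.filter fun u => H.edist v u = ((3:ℕ):ℕ∞)).card ≤
      (univ.filter fun u => H.edist v u = ((2:ℕ):ℕ∞)).card := sphere_card_le hdeg v 1
  calc (univ.filter fun u => H.edist v u ≤ 3).card ≤ _ := Finset.card_le_card hsub
  _ ≤ _ := (Finset.card_union_le _ _)
  _ ≤ _ := by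
      have := Finset.card_union_le
        ((univ.filter fun u => H.edist v u = ((0:ℕ):ℕ∞)) ∪
         (univ.filter fun u => H.edist v u = ((1:ℕ):ℕ∞)))
        (univ.filter fun u => H.edist v u = ((2:ℕ):ℕ∞))
      have h01 := Finset.card_union_le
        (univ.filter fun u => H.edist v u = ((0:ℕ):ℕ∞))
        (univ.filter fun u => H.edist v u = ((1:ℕ):ℕ∞))
      omega

lemma greedy (hdeg : ∀ v, (H.neighborSet v).ncard ≤ 2) (T : Finset (Fin n)) :
    ∃ S : Finset (Fin n), T.card ≤ 7 * S.card ∧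
      (∀ x ∈ S, ∀ y ∈ S, x ≠ y → (3 : ℕ∞) < H.edist x y) ∧ ∀ x ∈ S, x ∈ T := by
  classical
  induction T using Finset.strongInduction with
  | _ T ih =>
    rcases T.eq_empty_or_nonempty with rfl | ⟨v, hv⟩
    · exact ⟨∅, by simp, by simp, by simp⟩
    · set B : Finset (Fin n) := univ.filter fun u => H.edist v u ≤ 3 with hB
      have hvB : v ∈ B := by simp [hB]
      have hss : T \ B ⊂ T :=
        (Finset.ssubset_iff_of_subset (Finset.sdiff_subset)).mpr
          ⟨v, hv, by simp [hvB]⟩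
      obtain ⟨S', hcard', hind', hsub'⟩ := ih (T \ B) hss
      have hkey : ∀ y ∈ S', (3 : ℕ∞) < H.edist v y := by
        intro y hy
        have := hsub' y hy
        rw [Finset.mem_sdiff] at this
        have hyB : ¬ H.edist v y ≤ 3 := by
          intro h
          exact this.2 (by simp [hB, h])
        exact not_le.mp hyB
      have hvS' : v ∉ S' := by
        intro h
        exact absurd (hkey v h) (by simp)
      refine ⟨insert v S', ?_, ?_, ?_⟩
      · rw [Finset.card_insert_of_notMem hvS']
        have hTB : (T ∩ B).card ≤ 7 :=
          le_trans (Finset.card_le_card Finset.inter_subset_right) (ball_card_le hdeg v)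
        have heq : (T \ B).card + (T ∩ B).card = T.card :=
          Finset.card_sdiff_add_card_inter T B
        omega
      · intro x hx y hy hxy
        rcases Finset.mem_insert.mp hx with rfl | hx' <;>
          rcases Finset.mem_insert.mp hy with rfl | hy'
        · exact absurd rfl hxy
        · exact hkey y hy'
        · rw [SimpleGraph.edist_comm]; exact hkey x hx'
        · exact hind' x hx' y hy' hxy
      · intro x hx
        rcases Finset.mem_insert.mp hx with rfl | hx'
        · exact hv
        · exact (Finset.mem_sdiff.mp (hsub' x hx')).1

theorem stmt11 (n : ℕ) (H : SimpleGraph (Fin n))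
    (hdeg : ∀ v, (H.neighborSet v).ncard ≤ 2) :
    ∃ S : Finset (Fin n), (n : ℝ) / 7 ≤ (S.card : ℝ) ∧ KIndep H 3 S := by
  obtain ⟨S, hcard, hind, -⟩ := greedy hdeg Finset.univ
  refine ⟨S, ?_, ?_⟩
  · have hn : n ≤ 7 * S.card := by simpa using hcard
    rw [div_le_iff₀ (by norm_num)]
    have : (n : ℝ) ≤ 7 * S.card := by exact_mod_cast hn
    linarith
  · intro x hx y hy hxy
    have := hind x hx y hy hxy
    simpa using this
end
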